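/- Fix a ∈ {1,…,n−1} and suppose λ_a > 0 (equivalently c_{a−1} > c_a). For any t ∈ 𝒜(λ') and any k ≥ 0 such that there is an integer r > k with r ∉ t_{·,a} and r ≤ c_{a−1}, and an integer s > k with s ∈ t_{·,a+1} (when c_{a+1} > 0), the filling t' obtained by inserting the minimal such r into column a and replacing the minimal such s in column a+1 by c_a + 1 (re-sorting the column decreasingly) lies in 𝒜(λ''), where λ'' has column lengths c'_b = c_b + δ_{a,b}. -/

import Mathlib

/-- The set of entries of column `k` of a tableau `t` with column heights `c`. -/
def colSet (c : ℕ → ℕ) (t : ℕ → ℕ → ℕ) (k : ℕ) : Finset ℕ :=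
  (Finset.Icc 1 (c k)).image fun j => t j k

/-- Column-height function extended by the convention `c_0 := c_1`. -/
def cext (c : ℕ → ℕ) (k : ℕ) : ℕ := if k = 0 then c 1 else c k

/-- The `j`-th largest element of a finset of naturals (1-indexed). -/
def decSorted (S : Finset ℕ) (j : ℕ) : ℕ :=
  ((S.sort (· ≤ ·)).reverse).getD (j - 1) 0

lemma decSorted_pairwise (S : Finset ℕ) :
    ((S.sort (· ≤ ·)).reverse).Pairwise (· > ·) := by
  rw [List.pairwise_reverse]
  exact S.sortedLT_sort.pairwise

lemma decSorted_len (S : Finset ℕ) : ((S.sort (· ≤ ·)).reverse).length = S.card := by simp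

lemma decSorted_lt (S : Finset ℕ) {i j : ℕ} (hi : 1 ≤ i) (hij : i < j) (hj : j ≤ S.card) :
    decSorted S j < decSorted S i := by
  have hlen := decSorted_len S
  have hp := decSorted_pairwise S
  rw [List.pairwise_iff_getElem] at hp
  have h := hp (i - 1) (j - 1) (by omega) (by omega) (by omega)
  rw [decSorted, decSorted, List.getD_eq_getElem _ _ (by omega),
    List.getD_eq_getElem _ _ (by omega)]
  exact h

lemma decSorted_mem (S : Finset ℕ) {j : ℕ} (h1 : 1 ≤ j) (h2 : j ≤ S.card) :
    decSorted S j ∈ S := by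
  have hlen := decSorted_len S
  have : decSorted S j ∈ (S.sort (· ≤ ·)).reverse := by
    rw [decSorted, List.getD_eq_getElem _ _ (by omega)]
    exact List.getElem_mem _
  rw [List.mem_reverse, Finset.mem_sort] at this
  exact this

lemma decSorted_image (S : Finset ℕ) :
    (Finset.Icc 1 S.card).image (decSorted S) = S := by
  apply Finset.eq_of_subset_of_card_le
  · intro x hx
    simp only [Finset.mem_image, Finset.mem_Icc] at hx
    obtain ⟨j, ⟨h1, h2⟩, rfl⟩ := hx
    exact decSorted_mem S h1 h2
  · rw [Finset.card_image_of_injOn, Nat.card_Icc]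
    · omega
    · intro i hi j hj hij
      simp only [Finset.mem_coe, Finset.mem_Icc] at hi hj
      by_contra hne
      rcases Nat.lt_trichotomy i j with h | h | h
      · exact absurd hij (decSorted_lt S hi.1 h hj.2).ne'
      · exact hne h
      · exact absurd hij (decSorted_lt S hj.1 h hi.2).ne

lemma chain_lt (m : ℕ) (f : ℕ → ℕ)
    (h : ∀ j, 1 ≤ j → j + 1 ≤ m → f (j + 1) < f j) :
    ∀ i j, 1 ≤ i → i < j → j ≤ m → f j < f i := by
  intro i j hi hij hj
  induction j with
  | zero => omega
  | succ jj ih =>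
    rcases Nat.lt_or_ge i jj with h1 | h1
    · exact lt_trans (h jj (by omega) (by omega)) (ih (by omega) (by omega))
    · have : i = jj := by omega
      subst this
      exact h i hi (by omega)

/-- the tableau-modification step.  Given `t ∈ 𝒜(λ')`, `λ_a > 0`, and
`r > k` minimal with `r ∉ t_{·,a}`, `r ≤ c_{a-1}`, and (when `c_{a+1} > 0`) `s > k`
minimal with `s ∈ t_{·,a+1}`, the filling `t'` obtained by inserting `r` into column `a`
and replacing `s` in column `a+1` by `c_a + 1` (re-sorting columns decreasingly)
lies in `𝒜(λ'')`, where `λ''` has column lengths `c'_b = c_b + δ_{a,b}`. -/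
theorem tableau_modification_step
    (n : ℕ) (hn : 2 ≤ n) (lam : ℕ → ℕ) (c : ℕ → ℕ)
    (hc : ∀ k, 1 ≤ k → c k = ∑ j ∈ Finset.Icc (k + 1) n, lam j)
    (t : ℕ → ℕ → ℕ) (a k r s : ℕ)
    (ha1 : 1 ≤ a) (ha2 : a ≤ n - 1) (hla : 0 < lam a)
    (hdec : ∀ kk j, 1 ≤ kk → kk ≤ n - 1 → 1 ≤ j → j + 1 ≤ c kk → t (j + 1) kk < t j kk)
    (hrange : ∀ kk j, 1 ≤ kk → kk ≤ n - 1 → 1 ≤ j → j ≤ c kk →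
      1 ≤ t j kk ∧ t j kk ≤ cext c (kk - 1))
    (hr1 : k < r) (hr2 : r ∉ colSet c t a) (hr3 : r ≤ cext c (a - 1))
    (hrmin : ∀ r', k < r' → r' ∉ colSet c t a → r ≤ r')
    (hs : 0 < c (a + 1) →
      k < s ∧ s ∈ colSet c t (a + 1) ∧
        ∀ s', k < s' → s' ∈ colSet c t (a + 1) → s ≤ s') :
    ∃ t' : ℕ → ℕ → ℕ,
      (∀ kk j, 1 ≤ kk → kk ≤ n - 1 → 1 ≤ j →
          j + 1 ≤ c kk + (if kk = a then 1 else 0) → t' (j + 1) kk < t' j kk) ∧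
      (∀ kk j, 1 ≤ kk → kk ≤ n - 1 → 1 ≤ j → j ≤ c kk + (if kk = a then 1 else 0) →
          1 ≤ t' j kk ∧
            t' j kk ≤ cext (fun b => c b + if b = a then 1 else 0) (kk - 1)) ∧
      colSet (fun b => c b + if b = a then 1 else 0) t' a = insert r (colSet c t a) ∧
      (0 < c (a + 1) →
        colSet (fun b => c b + if b = a then 1 else 0) t' (a + 1) =
          insert (c a + 1) ((colSet c t (a + 1)).erase s)) ∧
      (c (a + 1) = 0 →
        colSet (fun b => c b + if b = a then 1 else 0) t' (a + 1) =
          colSet c t (a + 1)) ∧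
      (∀ b, b ≠ a → b ≠ a + 1 →
        colSet (fun b' => c b' + if b' = a then 1 else 0) t' b = colSet c t b) := by
  classical
  have hmemcol : ∀ kk x, x ∈ colSet c t kk ↔ ∃ j, 1 ≤ j ∧ j ≤ c kk ∧ t j kk = x := by
    intro kk x
    simp [colSet, Finset.mem_image, Finset.mem_Icc, and_assoc]
  have hcard : ∀ kk, 1 ≤ kk → kk ≤ n - 1 → (colSet c t kk).card = c kk := by
    intro kk h1 h2
    rw [colSet, Finset.card_image_of_injOn, Nat.card_Icc]
    · omega
    · intro i hi j hj hij
      simp only [Finset.mem_coe, Finset.mem_Icc] at hi hj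
      by_contra hne
      rcases Nat.lt_trichotomy i j with h | h | h
      · exact absurd hij (chain_lt (c kk) (fun j => t j kk)
          (fun j hj1 hj2 => hdec kk j h1 h2 hj1 hj2) i j hi.1 h hj.2).ne'
      · exact hne h
      · exact absurd hij (chain_lt (c kk) (fun j => t j kk)
          (fun j hj1 hj2 => hdec kk j h1 h2 hj1 hj2) j i hj.1 h hi.2).ne
  set Sa := insert r (colSet c t a) with hSadef
  have hSacard : Sa.card = c a + 1 := by
    rw [hSadef, Finset.card_insert_of_notMem hr2, hcard a ha1 ha2]
  set T := insert (c a + 1) ((colSet c t (a + 1)).erase s) with hTdef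
  have ha1n : 0 < c (a + 1) → a + 1 ≤ n - 1 := by
    intro hpos
    by_contra hcon
    have han : a + 1 = n := by omega
    have hzero : c (a + 1) = 0 := by
      rw [han, hc n (by omega), Finset.Icc_eq_empty (by omega), Finset.sum_empty]
    omega
  have hbnd1 : ∀ x ∈ colSet c t (a + 1), 0 < c (a + 1) → 1 ≤ x ∧ x ≤ c a := by
    intro x hx hpos
    rw [hmemcol] at hx
    obtain ⟨j, hj1, hj2, rfl⟩ := hx
    have h := hrange (a + 1) j (by omega) (ha1n hpos) hj1 hj2
    have hca : cext c (a + 1 - 1) = c a := by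
      unfold cext
      rw [Nat.add_sub_cancel, if_neg (by omega)]
    rw [hca] at h
    exact h
  have hTcard : 0 < c (a + 1) → T.card = c (a + 1) := by
    intro hpos
    obtain ⟨hs1, hs2, hs3⟩ := hs hpos
    have hnm : c a + 1 ∉ (colSet c t (a + 1)).erase s := by
      intro hmem
      have := hbnd1 _ (Finset.mem_of_mem_erase hmem) hpos
      omega
    rw [hTdef, Finset.card_insert_of_notMem hnm, Finset.card_erase_of_mem hs2,
      hcard (a + 1) (by omega) (ha1n hpos)]
    omega
  have hcm : ∀ m, cext c m ≤ cext (fun b => c b + if b = a then 1 else 0) m := by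
    intro m
    unfold cext
    rcases eq_or_ne m 0 with h | h
    · simp only [h, if_pos rfl]
      split <;> omega
    · simp only [if_neg h]
      split <;> omega
  let t' : ℕ → ℕ → ℕ := fun j kk =>
    if kk = a then decSorted Sa j
    else if kk = a + 1 ∧ 0 < c (a + 1) then decSorted T j
    else t j kk
  have ht'a : ∀ j, t' j a = decSorted Sa j := fun j => by
    simp only [t', if_pos rfl]
  have ht'a1 : 0 < c (a + 1) → ∀ j, t' j (a + 1) = decSorted T j := by
    intro hpos j
    simp only [t']
    rw [if_neg (show ¬ a + 1 = a by omega)]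
    simp [hpos]
  have ht'o : ∀ j kk, kk ≠ a → (kk ≠ a + 1 ∨ c (a + 1) = 0) → t' j kk = t j kk := by
    intro j kk h1 h2
    simp only [t']
    rw [if_neg h1, if_neg (by rintro ⟨rfl, hp⟩; rcases h2 with h | h <;> omega)]
  refine ⟨t', ?_, ?_, ?_, ?_, ?_, ?_⟩
  · -- strictly decreasing columns
    intro kk j h1 h2 h3 h4
    by_cases hka : kk = a
    · subst hka
      rw [if_pos rfl] at h4
      rw [ht'a, ht'a]
      exact decSorted_lt Sa h3 (by omega) (by omega)
    · rw [if_neg hka] at h4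
      by_cases hk2 : kk = a + 1
      · subst hk2
        have hpos : 0 < c (a + 1) := by omega
        rw [ht'a1 hpos, ht'a1 hpos]
        have := hTcard hpos
        exact decSorted_lt T h3 (by omega) (by omega)
      · rw [ht'o _ _ hka (Or.inl hk2), ht'o _ _ hka (Or.inl hk2)]
        exact hdec kk j h1 h2 h3 h4
  · -- entry bounds
    intro kk j h1 h2 h3 h4
    by_cases hka : kk = a
    · subst hka
      rw [if_pos rfl] at h4
      rw [ht'a]
      have hmem : decSorted Sa j ∈ Sa := decSorted_mem Sa h3 (by omega)
      have hmem' := Finset.mem_insert.mp hmem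
      have hb : 1 ≤ decSorted Sa j ∧ decSorted Sa j ≤ cext c (kk - 1) := by
        rcases hmem' with h | h
        · rw [h]; exact ⟨by omega, hr3⟩
        · rw [hmemcol] at h
          obtain ⟨j', hj'1, hj'2, hj'3⟩ := h
          rw [← hj'3]
          exact hrange kk j' ha1 ha2 hj'1 hj'2
      exact ⟨hb.1, le_trans hb.2 (hcm (kk - 1))⟩
    · rw [if_neg hka] at h4
      by_cases hk2 : kk = a + 1
      · subst hk2
        have hpos : 0 < c (a + 1) := by omega
        rw [ht'a1 hpos]
        have := hTcard hpos
        have hmem : decSorted T j ∈ T := decSorted_mem T h3 (by omega)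
        have hmem' := Finset.mem_insert.mp hmem
        have hcx : cext (fun b => c b + if b = a then 1 else 0) (a + 1 - 1) = c a + 1 := by
          unfold cext
          rw [Nat.add_sub_cancel, if_neg (by omega)]
          simp
        rw [hcx]
        rcases hmem' with h | h
        · rw [h]; exact ⟨by omega, le_refl _⟩
        · have := hbnd1 _ (Finset.mem_of_mem_erase h) hpos
          exact ⟨this.1, by omega⟩
      · rw [ht'o _ _ hka (Or.inl hk2)]
        have := hrange kk j h1 h2 h3 h4
        exact ⟨this.1, le_trans this.2 (hcm (kk - 1))⟩
  · -- column a
    show (Finset.Icc 1 ((fun b => c b + if b = a then 1 else 0) a)).image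
        (fun j => t' j a) = Sa
    rw [show ((fun b => c b + if b = a then 1 else 0) a) = Sa.card by simp [hSacard]]
    rw [Finset.image_congr (fun j _ => ht'a j)]
    exact decSorted_image Sa
  · -- column a+1, positive case
    intro hpos
    show (Finset.Icc 1 ((fun b => c b + if b = a then 1 else 0) (a + 1))).image
        (fun j => t' j (a + 1)) = T
    rw [show ((fun b => c b + if b = a then 1 else 0) (a + 1)) = T.card by
      simp only []
      rw [if_neg (show ¬ a + 1 = a by omega), hTcard hpos]
      rfl]
    rw [Finset.image_congr (fun j _ => ht'a1 hpos j)]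
    exact decSorted_image T
  · -- column a+1, zero case
    intro hzero
    show (Finset.Icc 1 ((fun b => c b + if b = a then 1 else 0) (a + 1))).image
        (fun j => t' j (a + 1)) = colSet c t (a + 1)
    rw [show ((fun b => c b + if b = a then 1 else 0) (a + 1)) = c (a + 1) by
      simp only []
      rw [if_neg (show ¬ a + 1 = a by omega)]
      rfl]
    rw [Finset.image_congr (fun j _ => ht'o j (a + 1) (by omega) (Or.inr hzero))]
    rfl
  · -- other columns
    intro b hb hb'
    show (Finset.Icc 1 ((fun b' => c b' + if b' = a then 1 else 0) b)).image
        (fun j => t' j b) = colSet c t b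
    rw [show ((fun b' => c b' + if b' = a then 1 else 0) b) = c b by
      simp only []
      rw [if_neg hb]
      rfl]
    rw [Finset.image_congr (fun j _ => ht'o j b hb (Or.inl hb'))]
    rfl
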